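/- Let H be a complex Hilbert space, D ⊆ H a subspace, and P : D → H a linear map that is symmetric on D (⟨Pφ, φ′⟩ = ⟨φ, Pφ′⟩ for all φ, φ′ ∈ D). Let B, B̃, E be bounded linear operators on H, let W be a bounded self-adjoint operator on H, and let a, c′ > 0. Assume that for every φ ∈ D: −2 Im⟨Bφ, B(Pφ)⟩ ≥ a‖WBφ‖² − c′‖WB̃φ‖² − ‖Eφ‖². Then for every z ∈ ℂ with Im z > 0, every φ ∈ D, and every η ∈ H with Wη = B(Pφ − zφ), one has (a/2)‖WBφ‖² + 2(Im z)‖Bφ‖² ≤ (2/a)‖η‖² + c′‖WB̃φ‖² + ‖Eφ‖². -/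

import Mathlib

open scoped ComplexInnerProductSpace

/-- abstract form of the key commutator estimate (2.4) of the paper: if the
positive commutator bound `−2 Im⟪Bφ, BPφ⟫ ≥ a‖WBφ‖² − c′‖WB̃φ‖² − ‖Eφ‖²` holds for the
symmetric operator `P` on the subspace `D`, then for `Im z > 0`, `φ ∈ D` and `η` with
`Wη = B(Pφ − zφ)` one has
`(a/2)‖WBφ‖² + 2(Im z)‖Bφ‖² ≤ (2/a)‖η‖² + c′‖WB̃φ‖² + ‖Eφ‖²`. -/
theorem stmt15 (H : Type*) [NormedAddCommGroup H] [InnerProductSpace ℂ H] [CompleteSpace H]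
    (D : Submodule ℂ H) (P : D →ₗ[ℂ] H)
    (hP : ∀ φ φ' : D, ⟪P φ, (φ' : H)⟫ = ⟪(φ : H), P φ'⟫)
    (B Bt E W : H →L[ℂ] H) (hW : IsSelfAdjoint W)
    (a c' : ℝ) (ha : 0 < a) (hc' : 0 < c')
    (hcomm : ∀ φ : D,
      a * ‖W (B (φ : H))‖ ^ 2 - c' * ‖W (Bt (φ : H))‖ ^ 2 - ‖E (φ : H)‖ ^ 2
        ≤ -2 * (⟪B (φ : H), B (P φ)⟫).im) :
    ∀ z : ℂ, 0 < z.im → ∀ φ : D, ∀ η : H, W η = B (P φ - z • (φ : H)) →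
      a / 2 * ‖W (B (φ : H))‖ ^ 2 + 2 * z.im * ‖B (φ : H)‖ ^ 2
        ≤ 2 / a * ‖η‖ ^ 2 + c' * ‖W (Bt (φ : H))‖ ^ 2 + ‖E (φ : H)‖ ^ 2 := by
  intro z hz φ η hη
  have hBP : B (P φ) = W η + z • B (φ : H) := by
    rw [hη]; simp [map_sub, map_smul]
  have hsym : ⟪W (B (φ : H)), η⟫ = ⟪B (φ : H), W η⟫ := hW.isSymmetric (B (φ : H)) η
  have hinner : ⟪B (φ : H), B (P φ)⟫
      = ⟪W (B (φ : H)), η⟫ + z * (‖B (φ : H)‖ : ℂ) ^ 2 := by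
    rw [hBP, inner_add_right, inner_smul_right, ← hsym, inner_self_eq_norm_sq_to_K]
    rfl
  have him : (⟪B (φ : H), B (P φ)⟫).im
      = (⟪W (B (φ : H)), η⟫).im + z.im * ‖B (φ : H)‖ ^ 2 := by
    rw [hinner]
    simp [Complex.add_im, Complex.mul_im, ← Complex.ofReal_pow]
  have hbd : |(⟪W (B (φ : H)), η⟫).im| ≤ ‖W (B (φ : H))‖ * ‖η‖ :=
    le_trans (by exact Complex.abs_im_le_norm _)
      (norm_inner_le_norm _ _)
  have h1 := hcomm φ
  rw [him] at h1
  have habs := (abs_le.mp hbd).1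
  set X := ‖W (B (φ : H))‖ with hX
  set Y := ‖η‖ with hY
  have hst : Real.sqrt (a / 2) * Real.sqrt (2 / a) = 1 := by
    rw [← Real.sqrt_mul (by positivity), show a / 2 * (2 / a) = 1 by field_simp,
      Real.sqrt_one]
  have hAM : 2 * (X * Y) ≤ a / 2 * X ^ 2 + 2 / a * Y ^ 2 := by
    have h2 := two_mul_le_add_sq (Real.sqrt (a / 2) * X) (Real.sqrt (2 / a) * Y)
    have e1 : (Real.sqrt (a / 2) * X) ^ 2 = a / 2 * X ^ 2 := by
      rw [mul_pow, Real.sq_sqrt (by positivity)]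
    have e2 : (Real.sqrt (2 / a) * Y) ^ 2 = 2 / a * Y ^ 2 := by
      rw [mul_pow, Real.sq_sqrt (by positivity)]
    have e3 : 2 * (Real.sqrt (a / 2) * X) * (Real.sqrt (2 / a) * Y) = 2 * (X * Y) := by
      rw [show 2 * (Real.sqrt (a / 2) * X) * (Real.sqrt (2 / a) * Y)
          = 2 * (Real.sqrt (a / 2) * Real.sqrt (2 / a)) * (X * Y) by ring, hst]
      ring
    rw [e1, e2, e3] at h2
    exact h2
  linarith
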